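/- (Inequality part of Corollary 3.1.) Let n ≥ 1 and let F : 𝒦ⁿ → [0,∞) be positively homogeneous, increasing and concave, and let p ∈ (1,∞). Then for all K, L ∈ 𝒦ⁿₒ, F(K +_p L)^p ≥ F(K)^p + F(L)^p. -/

import Mathlib

open scoped Pointwise RealInnerProductSpace

/-- A convex body in `ℝⁿ`: a compact convex set with nonempty interior. -/
def IsConvexBody {n : ℕ} (K : Set (EuclideanSpace ℝ (Fin n))) : Prop :=
  IsCompact K ∧ Convex ℝ K ∧ (interior K).Nonempty

/-- A convex body containing the origin in its interior. -/
def IsConvexBodyO {n : ℕ} (K : Set (EuclideanSpace ℝ (Fin n))) : Prop :=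
  IsCompact K ∧ Convex ℝ K ∧ (0 : EuclideanSpace ℝ (Fin n)) ∈ interior K

/-- The support function of a set: `h_K(u) = sup { ⟪x, u⟫ : x ∈ K }`. -/
noncomputable def supp {n : ℕ} (K : Set (EuclideanSpace ℝ (Fin n)))
    (u : EuclideanSpace ℝ (Fin n)) : ℝ :=
  sSup ((fun x => ⟪x, u⟫) '' K)

namespace LpAux

variable {n : ℕ}

lemma cont (u : EuclideanSpace ℝ (Fin n)) :
    Continuous fun x : EuclideanSpace ℝ (Fin n) => ⟪x, u⟫ :=
  continuous_id.inner continuous_const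

lemma bddAbove_img {K : Set (EuclideanSpace ℝ (Fin n))} (hK : IsCompact K)
    (u : EuclideanSpace ℝ (Fin n)) : BddAbove ((fun x => ⟪x, u⟫) '' K) :=
  (hK.image (cont u)).bddAbove

lemma le_supp {K : Set (EuclideanSpace ℝ (Fin n))} (hK : IsCompact K)
    {x : EuclideanSpace ℝ (Fin n)} (hx : x ∈ K) (u : EuclideanSpace ℝ (Fin n)) :
    ⟪x, u⟫ ≤ supp K u :=
  le_csSup (bddAbove_img hK u) ⟨x, hx, rfl⟩

lemma supp_le {K : Set (EuclideanSpace ℝ (Fin n))} (hne : K.Nonempty)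
    {u : EuclideanSpace ℝ (Fin n)} {r : ℝ} (h : ∀ x ∈ K, ⟪x, u⟫ ≤ r) :
    supp K u ≤ r :=
  csSup_le (hne.image _) (by rintro _ ⟨x, hx, rfl⟩; exact h x hx)

lemma exists_supp {K : Set (EuclideanSpace ℝ (Fin n))} (hK : IsCompact K)
    (hne : K.Nonempty) (u : EuclideanSpace ℝ (Fin n)) :
    ∃ x ∈ K, supp K u = ⟪x, u⟫ := by
  obtain ⟨x, hxK, hx⟩ := hK.exists_isMaxOn hne (cont u).continuousOn
  exact ⟨x, hxK, le_antisymm (supp_le ⟨x, hxK⟩ fun y hy => hx hy) (le_supp hK hxK u)⟩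

lemma supp_smul {K : Set (EuclideanSpace ℝ (Fin n))} (hK : IsCompact K)
    (hne : K.Nonempty) {c : ℝ} (hc : 0 < c) (u : EuclideanSpace ℝ (Fin n)) :
    supp (c • K) u = c * supp K u := by
  obtain ⟨x, hxK, hx⟩ := exists_supp hK hne u
  have hcK : IsCompact (c • K) := hK.smul c
  have hmem : c • x ∈ c • K := Set.smul_mem_smul_set hxK
  refine le_antisymm (supp_le (hne.smul_set) ?_) ?_
  · rintro _ ⟨y, hy, rfl⟩
    rw [inner_smul_left]
    simpa using mul_le_mul_of_nonneg_left (le_supp hK hy u) hc.le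
  · calc c * supp K u = ⟪c • x, u⟫ := by rw [inner_smul_left, hx]; simp
      _ ≤ supp (c • K) u := le_supp hcK hmem u

lemma supp_add {K L : Set (EuclideanSpace ℝ (Fin n))} (hK : IsCompact K)
    (hL : IsCompact L) (hKne : K.Nonempty) (hLne : L.Nonempty)
    (u : EuclideanSpace ℝ (Fin n)) :
    supp (K + L) u = supp K u + supp L u := by
  obtain ⟨x, hxK, hx⟩ := exists_supp hK hKne u
  obtain ⟨y, hyL, hy⟩ := exists_supp hL hLne u
  refine le_antisymm (supp_le (hKne.add hLne) ?_) ?_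
  · rintro _ ⟨a, ha, b, hb, rfl⟩
    rw [inner_add_left]
    exact add_le_add (le_supp hK ha u) (le_supp hL hb u)
  · calc supp K u + supp L u = ⟪x + y, u⟫ := by rw [inner_add_left, hx, hy]
      _ ≤ supp (K + L) u := le_supp (hK.add hL) (Set.add_mem_add hxK hyL) u

lemma supp_pos {K : Set (EuclideanSpace ℝ (Fin n))}
    (h0 : (0 : EuclideanSpace ℝ (Fin n)) ∈ interior K) (hK : IsCompact K)
    {u : EuclideanSpace ℝ (Fin n)} (hu : ‖u‖ = 1) : 0 < supp K u := by
  obtain ⟨ε, hε, hball⟩ := Metric.mem_nhds_iff.mp (mem_interior_iff_mem_nhds.mp h0)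
  have hmem : (ε / 2) • u ∈ K := by
    apply hball
    simp only [Metric.mem_ball, dist_zero_right, norm_smul, hu]
    rw [Real.norm_eq_abs, abs_of_pos (by linarith)]
    linarith
  have : ⟪(ε / 2 : ℝ) • u, u⟫ = ε / 2 := by
    rw [inner_smul_left, real_inner_self_eq_norm_sq, hu]
    simp
  calc (0:ℝ) < ε / 2 := by linarith
    _ = ⟪(ε / 2 : ℝ) • u, u⟫ := this.symm
    _ ≤ supp K u := le_supp hK hmem u

/-- If the support function of `K` is dominated by that of a compact convex `M` on the
unit sphere, then `K ⊆ M`. -/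
lemma subset_of_supp_le {K M : Set (EuclideanSpace ℝ (Fin n))}
    (hKcomp : IsCompact K) (hM : IsCompact M) (hMc : Convex ℝ M) (hMne : M.Nonempty)
    (h : ∀ u : EuclideanSpace ℝ (Fin n), ‖u‖ = 1 → supp K u ≤ supp M u) : K ⊆ M := by
  intro x hx
  by_contra hxM
  obtain ⟨f, s, hfM, hfx⟩ := geometric_hahn_banach_closed_point hMc hM.isClosed hxM
  set v := (InnerProductSpace.toDual ℝ (EuclideanSpace ℝ (Fin n))).symm f with hv
  have hfv : ∀ y, ⟪v, y⟫ = f y := fun y =>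
    InnerProductSpace.toDual_symm_apply
  have hvne : v ≠ 0 := by
    obtain ⟨m, hm⟩ := hMne
    intro h0
    have h1 : f m < f x := lt_trans (hfM m hm) hfx
    have h2 : f m = 0 := by rw [← hfv m, h0]; simp
    have h3 : f x = 0 := by rw [← hfv x, h0]; simp
    rw [h2, h3] at h1; exact lt_irrefl _ h1
  set u := ‖v‖⁻¹ • v with hu
  have hun : ‖u‖ = 1 := norm_smul_inv_norm hvne
  have hvpos : (0:ℝ) < ‖v‖⁻¹ := inv_pos.mpr (norm_pos_iff.mpr hvne)
  have hMsup : supp M u ≤ ‖v‖⁻¹ * s := by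
    refine supp_le hMne fun y hy => ?_
    rw [real_inner_comm, hu, inner_smul_left]
    simp only [RCLike.conj_to_real]
    exact mul_le_mul_of_nonneg_left (by rw [hfv]; exact (hfM y hy).le) hvpos.le
  have hKsup : ‖v‖⁻¹ * s < supp K u := by
    calc ‖v‖⁻¹ * s < ‖v‖⁻¹ * f x := by
          exact (mul_lt_mul_iff_right₀ hvpos).mpr hfx
      _ = ⟪x, u⟫ := by
          rw [real_inner_comm, hu, inner_smul_left]
          simp only [RCLike.conj_to_real]
          rw [hfv]
      _ ≤ supp K u := le_supp hKcomp hx u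
  exact absurd (h u hun) (not_le.mpr (lt_of_le_of_lt hMsup hKsup))

lemma body_smul {K : Set (EuclideanSpace ℝ (Fin n))} (hK : IsConvexBody K)
    {c : ℝ} (hc : 0 < c) : IsConvexBody (c • K) :=
  ⟨hK.1.smul c, hK.2.1.smul c,
    by rw [interior_smul₀ hc.ne']; exact hK.2.2.smul_set⟩

lemma body_add {A B : Set (EuclideanSpace ℝ (Fin n))} (hA : IsConvexBody A)
    (hB : IsConvexBody B) : IsConvexBody (A + B) := by
  refine ⟨hA.1.add hB.1, hA.2.1.add hB.2.1, ?_⟩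
  obtain ⟨a, ha⟩ := hA.2.2
  obtain ⟨b, hb⟩ := hB.2.2
  have hsub : interior A + B ⊆ A + B := Set.add_subset_add interior_subset le_rfl
  have hopen : IsOpen (interior A + B) := isOpen_interior.add_right
  exact ⟨a + b, interior_maximal hsub hopen (Set.add_mem_add ha (interior_subset hb))⟩

lemma holder {p : ℝ} (hp : 1 < p) {α X Y : ℝ} (hα : α ∈ Set.Ioo (0:ℝ) 1)
    (hX : 0 < X) (hY : 0 < Y) :
    (1 - α) ^ (1 - 1/p) * X + α ^ (1 - 1/p) * Y ≤ (X ^ p + Y ^ p) ^ (1/p) := by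
  obtain ⟨hα0, hα1⟩ := hα
  have hp0 : (0:ℝ) < p := by linarith
  have h1p : 1/p < 1 := by rw [div_lt_one hp0]; exact hp
  have h1p0 : 0 < 1/p := by positivity
  set s := X ^ p + Y ^ p with hs
  have hXp : 0 < X ^ p := Real.rpow_pos_of_pos hX p
  have hYp : 0 < Y ^ p := Real.rpow_pos_of_pos hY p
  have hs0 : 0 < s := by positivity
  have hsp : 0 < s ^ (1/p) := Real.rpow_pos_of_pos hs0 _
  have key : ∀ w Z : ℝ, 0 < w → 0 < Z →
      w ^ (1 - 1/p) * Z ≤ ((1 - 1/p) * w + 1/p * (Z ^ p / s)) * s ^ (1/p) := by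
    intro w Z hw hZ
    have hZp : 0 < Z ^ p := Real.rpow_pos_of_pos hZ p
    have h1 : (Z ^ p / s) ^ (1/p) = Z / s ^ (1/p) := by
      rw [Real.div_rpow hZp.le hs0.le, one_div, Real.rpow_rpow_inv hZ.le hp0.ne', ← one_div]
    have h2 := Real.geom_mean_le_arith_mean2_weighted
      (by linarith : (0:ℝ) ≤ 1 - 1/p) h1p0.le hw.le
      (by positivity : (0:ℝ) ≤ Z ^ p / s) (by ring)
    have h3 := mul_le_mul_of_nonneg_right h2 hsp.le
    rw [h1] at h3
    calc w ^ (1 - 1/p) * Z = w ^ (1 - 1/p) * (Z / s ^ (1/p)) * s ^ (1/p) := by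
          field_simp
      _ ≤ _ := h3
  have k1 := key (1 - α) X (by linarith) hX
  have k2 := key α Y hα0 hY
  have h2 : X ^ p / s + Y ^ p / s = 1 := by
    rw [← add_div, ← hs]; exact div_self hs0.ne'
  have hsum : ((1 - 1/p) * (1 - α) + 1/p * (X ^ p / s))
      + ((1 - 1/p) * α + 1/p * (Y ^ p / s)) = 1 := by
    linear_combination (1/p) * h2
  calc (1 - α) ^ (1 - 1/p) * X + α ^ (1 - 1/p) * Y
      ≤ (((1 - 1/p) * (1 - α) + 1/p * (X ^ p / s))
        + ((1 - 1/p) * α + 1/p * (Y ^ p / s))) * s ^ (1/p) := by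
        rw [add_mul]; exact add_le_add k1 k2
    _ = s ^ (1/p) := by rw [hsum, one_mul]

end LpAux

open LpAux

/-- Inequality part of Corollary 3.1.
If `F` is nonnegative, positively homogeneous, increasing and concave on convex bodies,
`1 < p < ∞`, `K, L ∈ 𝒦ⁿₒ`, and `M = K +_p L` is the convex body with origin in its
interior whose support function satisfies `h_M^p = h_K^p + h_L^p` on the unit sphere,
then `F(M)^p ≥ F(K)^p + F(L)^p`. -/
theorem lp_transference_sum_inequality {n : ℕ} (hn : 1 ≤ n)
    (F : Set (EuclideanSpace ℝ (Fin n)) → ℝ)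
    (hF0 : ∀ K, IsConvexBody K → 0 ≤ F K)
    (hFhom : ∀ c : ℝ, 0 < c → ∀ K, IsConvexBody K → F (c • K) = c * F K)
    (hFmono : ∀ K L, IsConvexBody K → IsConvexBody L → K ⊆ L → F K ≤ F L)
    (hFconc : ∀ K L, IsConvexBody K → IsConvexBody L → ∀ α : ℝ, α ∈ Set.Ioo (0:ℝ) 1 →
      (1 - α) * F K + α * F L ≤ F ((1 - α) • K + α • L))
    (p : ℝ) (hp : 1 < p)
    (K L M : Set (EuclideanSpace ℝ (Fin n)))
    (hK : IsConvexBodyO K) (hL : IsConvexBodyO L) (hM : IsConvexBodyO M)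
    (hMsupp : ∀ u : EuclideanSpace ℝ (Fin n), ‖u‖ = 1 →
      supp M u ^ p = supp K u ^ p + supp L u ^ p) :
    F K ^ p + F L ^ p ≤ F M ^ p := by
  obtain ⟨hKc, hKconv, hK0⟩ := hK
  obtain ⟨hLc, hLconv, hL0⟩ := hL
  obtain ⟨hMc, hMconv, hM0⟩ := hM
  have hp0 : (0:ℝ) < p := by linarith
  have hKne : K.Nonempty := ⟨0, interior_subset hK0⟩
  have hLne : L.Nonempty := ⟨0, interior_subset hL0⟩
  have hMne : M.Nonempty := ⟨0, interior_subset hM0⟩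
  have hKbody : IsConvexBody K := ⟨hKc, hKconv, ⟨0, hK0⟩⟩
  have hLbody : IsConvexBody L := ⟨hLc, hLconv, ⟨0, hL0⟩⟩
  have hMbody : IsConvexBody M := ⟨hMc, hMconv, ⟨0, hM0⟩⟩
  -- supp positivity on the sphere
  have hsK : ∀ u : EuclideanSpace ℝ (Fin n), ‖u‖ = 1 → 0 < supp K u :=
    fun u hu => supp_pos hK0 hKc hu
  have hsL : ∀ u : EuclideanSpace ℝ (Fin n), ‖u‖ = 1 → 0 < supp L u :=
    fun u hu => supp_pos hL0 hLc hu
  have hsM : ∀ u : EuclideanSpace ℝ (Fin n), ‖u‖ = 1 → 0 < supp M u :=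
    fun u hu => supp_pos hM0 hMc hu
  -- monotone containments K ⊆ M and L ⊆ M
  have hKM : K ⊆ M := by
    refine subset_of_supp_le hKc hMc hMconv hMne fun u hu => ?_
    have h := hMsupp u hu
    have hLp : 0 < supp L u ^ p := Real.rpow_pos_of_pos (hsL u hu) p
    have : supp K u ^ p ≤ supp M u ^ p := by linarith
    exact (Real.rpow_le_rpow_iff (hsK u hu).le (hsM u hu).le hp0).mp this
  have hLM : L ⊆ M := by
    refine subset_of_supp_le hLc hMc hMconv hMne fun u hu => ?_
    have h := hMsupp u hu
    have hKp : 0 < supp K u ^ p := Real.rpow_pos_of_pos (hsK u hu) p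
    have : supp L u ^ p ≤ supp M u ^ p := by linarith
    exact (Real.rpow_le_rpow_iff (hsL u hu).le (hsM u hu).le hp0).mp this
  rcases eq_or_lt_of_le (hF0 K hKbody) with hx0 | hx
  · -- F K = 0
    rw [← hx0, Real.zero_rpow hp0.ne', zero_add]
    exact Real.rpow_le_rpow (hF0 L hLbody) (hFmono L M hLbody hMbody hLM) hp0.le
  rcases eq_or_lt_of_le (hF0 L hLbody) with hy0 | hy
  · -- F L = 0
    rw [← hy0, Real.zero_rpow hp0.ne', add_zero]
    exact Real.rpow_le_rpow (hF0 K hKbody) (hFmono K M hKbody hMbody hKM) hp0.le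
  -- main case
  set x := F K with hxdef
  set y := F L with hydef
  have hxp : 0 < x ^ p := Real.rpow_pos_of_pos hx p
  have hyp : 0 < y ^ p := Real.rpow_pos_of_pos hy p
  set s := x ^ p + y ^ p with hs
  have hs0 : 0 < s := by positivity
  set α := y ^ p / s with hαdef
  have hα : α ∈ Set.Ioo (0:ℝ) 1 := by
    constructor
    · positivity
    · rw [hαdef, div_lt_one hs0]; linarith
  have h1α : 1 - α = x ^ p / s := by
    rw [hαdef, eq_div_iff hs0.ne', sub_mul, div_mul_cancel₀ _ hs0.ne', hs]; ring
  have h1α0 : 0 < 1 - α := by rw [h1α]; positivity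
  set c := 1 - 1/p with hcdef
  have hc0 : 0 < c := by
    rw [hcdef, sub_pos, div_lt_one hp0]; exact hp
  set a := (1 - α) ^ c with hadef
  set b := α ^ c with hbdef
  have ha : 0 < a := Real.rpow_pos_of_pos h1α0 c
  have hb : 0 < b := Real.rpow_pos_of_pos hα.1 c
  -- the inclusion a•K + b•L ⊆ M
  have hsubM : a • K + b • L ⊆ M := by
    refine subset_of_supp_le ((hKc.smul a).add (hLc.smul b)) hMc hMconv hMne fun u hu => ?_
    rw [supp_add (hKc.smul a) (hLc.smul b) (hKne.smul_set) (hLne.smul_set) u,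
      supp_smul hKc hKne ha u, supp_smul hLc hLne hb u]
    calc a * supp K u + b * supp L u
        ≤ (supp K u ^ p + supp L u ^ p) ^ (1/p) :=
          holder hp hα (hsK u hu) (hsL u hu)
      _ = supp M u := by
          rw [← hMsupp u hu, one_div, Real.rpow_rpow_inv (hsM u hu).le hp0.ne']
  have hABbody : IsConvexBody (a • K + b • L) :=
    body_add (body_smul hKbody ha) (body_smul hLbody hb)
  have step1 : F (a • K + b • L) ≤ F M := hFmono _ _ hABbody hMbody hsubM
  -- concavity + homogeneity
  have hKa : IsConvexBody ((a / (1 - α)) • K) := body_smul hKbody (by positivity)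
  have hLb : IsConvexBody ((b / α) • L) := body_smul hLbody (div_pos hb hα.1)
  have step2 : a * x + b * y ≤ F (a • K + b • L) := by
    have hconc := hFconc _ _ hKa hLb α hα
    have e1 : (1 - α) • ((a / (1 - α)) • K) = a • K := by
      rw [smul_smul, mul_div_cancel₀ _ h1α0.ne']
    have e2 : α • ((b / α) • L) = b • L := by
      rw [smul_smul, mul_div_cancel₀ _ hα.1.ne']
    rw [e1, e2, hFhom _ (div_pos ha h1α0) K hKbody, hFhom _ (div_pos hb hα.1) L hLbody] at hconc
    calc a * x + b * y
        = (1 - α) * (a / (1 - α) * x) + α * (b / α * y) := by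
          field_simp
          rw [mul_div_assoc, div_self hα.1.ne', mul_one]
      _ ≤ F (a • K + b • L) := hconc
  have hsc : (0:ℝ) < s ^ c := Real.rpow_pos_of_pos hs0 c
  have hmulc : s ^ (1/p) * s ^ c = s := by
    rw [← Real.rpow_add hs0, show 1/p + c = 1 by rw [hcdef]; ring, Real.rpow_one]
  have step3 : a * x + b * y = s ^ (1/p) := by
    have hpc : p * c + 1 = p := by rw [hcdef]; field_simp; ring
    have hax : a * x = x ^ p / s ^ c := by
      rw [hadef, h1α, Real.div_rpow hxp.le hs0.le, ← Real.rpow_mul hx.le,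
        div_mul_eq_mul_div, ← Real.rpow_add_one hx.ne', hpc]
    have hby : b * y = y ^ p / s ^ c := by
      rw [hbdef, hαdef, Real.div_rpow hyp.le hs0.le, ← Real.rpow_mul hy.le,
        div_mul_eq_mul_div, ← Real.rpow_add_one hy.ne', hpc]
    rw [hax, hby, ← add_div, ← hs, div_eq_iff hsc.ne']
    exact hmulc.symm
  have hFM : s ^ (1/p) ≤ F M := by
    rw [← step3]; exact le_trans step2 step1
  have hsp : (0:ℝ) < s ^ (1/p) := Real.rpow_pos_of_pos hs0 _
  calc x ^ p + y ^ p = s := hs.symm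
    _ = (s ^ (1/p)) ^ p := by
        rw [← Real.rpow_mul hs0.le, one_div_mul_cancel hp0.ne', Real.rpow_one]
    _ ≤ F M ^ p := Real.rpow_le_rpow hsp.le hFM hp0.le
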